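/- arXiv:2505.02614 — 7 statements merged into one kernel-verified Lean document; each statement's English description precedes it below -/
import Mathlib

section
/- (Generalized Pinsker inequality) For every x ∈ ℝ^n_+ and y ∈ ℝ^n_{++}, D_h(x,y) ≥ (1/2)·‖x−y‖₁² / max{‖x‖₁, ‖y‖₁}. -/
open Finset Filter

/-- Bregman divergence generated by the negative entropy
`h(x) = ∑ i, x i * (log (x i) - 1)` (with the convention `0 * log 0 = 0`,
which holds automatically since `Real.log 0 = 0`). -/
noncomputable def Dh {n : ℕ} (x y : Fin n → ℝ) : ℝ :=
  ∑ i, (x i * Real.log (x i / y i) - x i + y i)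

/-- ℓ₁-norm of a vector. -/
noncomputable def l1 {n : ℕ} (x : Fin n → ℝ) : ℝ := ∑ i, |x i|

private lemma log_ge_one_sub_inv {t : ℝ} (ht : 0 < t) : 1 - 1/t ≤ Real.log t := by
  have h := Real.log_le_sub_one_of_pos (show (0:ℝ) < 1/t by positivity)
  rw [one_div, Real.log_inv] at h
  rw [one_div]
  linarith [h]

private lemma hasDerivAt_f (s : ℝ) (hs : s ≠ 0) :
    HasDerivAt (fun t : ℝ => (t + 1) * Real.log t - 2 * (t - 1))
      (Real.log s + (s + 1) * s⁻¹ - 2) s := by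
  have h1 : HasDerivAt (fun t : ℝ => (t + 1) * Real.log t)
      (1 * Real.log s + (s + 1) * s⁻¹) s :=
    ((hasDerivAt_id s).add_const 1).mul (Real.hasDerivAt_log hs)
  have h2 : HasDerivAt (fun t : ℝ => 2 * (t - 1)) 2 s := by
    simpa using ((hasDerivAt_id s).sub_const 1).const_mul 2
  simpa [one_mul] using h1.fun_sub h2

/-- `log t ≥ 2(t-1)/(t+1)` for `t ≥ 1`, in product form. -/
private lemma lemA {t : ℝ} (ht : 1 ≤ t) : 2 * (t - 1) ≤ (t + 1) * Real.log t := by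
  set f : ℝ → ℝ := fun t => (t + 1) * Real.log t - 2 * (t - 1) with hf
  have mono : MonotoneOn f (Set.Ici 1) := by
    refine monotoneOn_of_deriv_nonneg (convex_Ici 1) ?_ ?_ ?_
    · apply ContinuousOn.sub
      · exact (continuousOn_id.add continuousOn_const).mul
          (Real.continuousOn_log.mono (by intro z hz; simp at hz ⊢; linarith))
      · fun_prop
    · intro z hz
      rw [interior_Ici] at hz
      have hz' : (1:ℝ) < z := hz
      exact (hasDerivAt_f z (by linarith)).differentiableAt.differentiableWithinAt
    · intro z hz
      rw [interior_Ici] at hz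
      have hz' : (1:ℝ) < z := hz
      rw [(hasDerivAt_f z (by linarith)).deriv]
      have h1 : 1 - 1/z ≤ Real.log z := log_ge_one_sub_inv (by linarith)
      have h2 : (z + 1) * z⁻¹ = 1 + 1/z := by field_simp
      rw [h2]; linarith
  have h1 : f 1 ≤ f t := mono (Set.mem_Ici.mpr le_rfl) (Set.mem_Ici.mpr ht) ht
  have h0 : f 1 = 0 := by simp [hf]
  have : 0 ≤ f t := by rw [← h0]; exact h1
  simp only [hf] at this
  linarith

/-- `log t ≤ 2(t-1)/(t+1)` for `0 < t ≤ 1`, in product form. -/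
private lemma lemB {t : ℝ} (h0 : 0 < t) (h1 : t ≤ 1) :
    (t + 1) * Real.log t ≤ 2 * (t - 1) := by
  have hA := lemA (t := 1/t) (by rw [le_div_iff₀ h0]; linarith)
  rw [one_div, Real.log_inv] at hA
  have h2 := mul_le_mul_of_nonneg_left hA h0.le
  have ht : t ≠ 0 := h0.ne'
  have h3 : t * (2 * (t⁻¹ - 1)) = 2 * (1 - t) := by field_simp <;> ring
  have h4 : t * ((t⁻¹ + 1) * -Real.log t) = -((t + 1) * Real.log t) := by field_simp <;> ring
  rw [h3, h4] at h2
  linarith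

private lemma hasDerivAt_H (s : ℝ) (hs : s ≠ 0) :
    HasDerivAt (fun t : ℝ => (t + 2) * (t * Real.log t - t + 1) - 3/2 * (t - 1)^2)
      (2 * ((s + 1) * Real.log s - 2 * (s - 1))) s := by
  have h1 : HasDerivAt (fun t : ℝ => (t + 2) * (t * Real.log t - t + 1))
      (1 * (s * Real.log s - s + 1) + (s + 2) * ((Real.log s + 1) - 1)) s :=
    ((hasDerivAt_id s).add_const 2).mul
      (((Real.hasDerivAt_mul_log hs).sub (hasDerivAt_id s)).add_const 1)
  have h2 : HasDerivAt (fun t : ℝ => 3/2 * (t - 1)^2) (3/2 * (2 * (s - 1))) s := by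
    have := (((hasDerivAt_id s).sub_const 1).pow 2).const_mul (3/2 : ℝ)
    simpa using this
  have h := h1.fun_sub h2
  refine h.congr_deriv ?_
  ring

/-- Key scalar inequality: `(3/2)(t-1)² ≤ (t+2)(t log t - t + 1)` for `t ≥ 0`. -/
private lemma lemC {t : ℝ} (ht : 0 ≤ t) :
    3/2 * (t - 1)^2 ≤ (t + 2) * (t * Real.log t - t + 1) := by
  set H : ℝ → ℝ := fun t => (t + 2) * (t * Real.log t - t + 1) - 3/2 * (t - 1)^2 with hH
  have H1 : H 1 = 0 := by simp [hH]
  have Hcont : Continuous H := by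
    simp only [hH]
    exact ((continuous_id.add continuous_const).mul
      ((Real.continuous_mul_log.sub continuous_id).add continuous_const)).sub
      (continuous_const.mul ((continuous_id.sub continuous_const).pow 2))
  rcases eq_or_lt_of_le ht with h | h
  · rw [← h]; simp [Real.log_zero]; norm_num
  rcases le_or_gt 1 t with h1 | h1
  · -- t ≥ 1 : H monotone on [1, ∞)
    have mono : MonotoneOn H (Set.Ici 1) := by
      refine monotoneOn_of_deriv_nonneg (convex_Ici 1) ?_ ?_ ?_
      · exact Hcont.continuousOn
      · intro z hz
        rw [interior_Ici] at hz
        have hz' : (1:ℝ) < z := hz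
        exact (hasDerivAt_H z (by linarith)).differentiableAt.differentiableWithinAt
      · intro z hz
        rw [interior_Ici] at hz
        have hz' : (1:ℝ) < z := hz
        rw [(hasDerivAt_H z (by linarith)).deriv]
        have := lemA hz'.le
        linarith
    have := mono (Set.mem_Ici.mpr le_rfl) (Set.mem_Ici.mpr h1) h1
    rw [H1] at this
    simp only [hH] at this
    linarith
  · -- 0 < t < 1 : H antitone on [t, 1]
    have anti : AntitoneOn H (Set.Icc t 1) := by
      refine antitoneOn_of_deriv_nonpos (convex_Icc t 1) ?_ ?_ ?_
      · exact Hcont.continuousOn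
      · intro z hz
        rw [interior_Icc] at hz
        exact (hasDerivAt_H z (by nlinarith [hz.1, hz.2, h])).differentiableAt.differentiableWithinAt
      · intro z hz
        rw [interior_Icc] at hz
        have hz0 : 0 < z := lt_trans h hz.1
        rw [(hasDerivAt_H z (by positivity)).deriv]
        have := lemB hz0 hz.2.le
        linarith
    have := anti (Set.mem_Icc.mpr ⟨le_rfl, h1.le⟩) (Set.mem_Icc.mpr ⟨h1.le, le_rfl⟩) h1.le
    rw [H1] at this
    simp only [hH] at this
    linarith

/-- Scaled version: `(3/2)(a-b)² ≤ (a+2b)(a log(a/b) - a + b)`. -/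
private lemma lemC' {a b : ℝ} (ha : 0 ≤ a) (hb : 0 < b) :
    3/2 * (a - b)^2 ≤ (a + 2*b) * (a * Real.log (a/b) - a + b) := by
  have hC := lemC (t := a/b) (by positivity)
  have h2 := mul_le_mul_of_nonneg_left hC (by positivity : (0:ℝ) ≤ b^2)
  have hbne : b ≠ 0 := hb.ne'
  have h3 : b^2 * (3/2 * (a/b - 1)^2) = 3/2 * (a - b)^2 := by field_simp
  have h4 : b^2 * ((a/b + 2) * (a/b * Real.log (a/b) - a/b + 1))
      = (a + 2*b) * (a * Real.log (a/b) - a + b) := by field_simp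
  rw [h3, h4] at h2
  exact h2

/-- Generalized Pinsker's inequality: for every `x ∈ ℝⁿ₊` and `y ∈ ℝⁿ₊₊`,
`D_h(x,y) ≥ (1/2) ‖x - y‖₁² / max {‖x‖₁, ‖y‖₁}`. -/
theorem generalized_pinsker {n : ℕ} (x y : Fin n → ℝ)
    (hx : ∀ i, 0 ≤ x i) (hy : ∀ i, 0 < y i) :
    Dh x y ≥ (1 / 2) * (l1 (x - y)) ^ 2 / max (l1 x) (l1 y) := by
  rcases Nat.eq_zero_or_pos n with h0 | hpos
  · subst h0
    simp [Dh, l1]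
  set s : Fin n → ℝ := fun i => (x i + 2 * y i) / 3 with hsdef
  have hs : ∀ i, 0 < s i := fun i => by
    have := hx i; have := hy i; simp only [hsdef]; positivity
  have hterm : ∀ i, (x i - y i)^2 / s i
      ≤ 2 * (x i * Real.log (x i / y i) - x i + y i) := by
    intro i
    have h := lemC' (hx i) (hy i)
    rw [div_le_iff₀ (hs i)]
    simp only [hsdef]
    nlinarith [h]
  have hne : (Finset.univ : Finset (Fin n)).Nonempty := ⟨⟨0, hpos⟩, Finset.mem_univ _⟩
  have hS : 0 < ∑ i, s i := Finset.sum_pos (fun i _ => hs i) hne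
  have hl1 : l1 (x - y) = ∑ i, |x i - y i| := by
    simp [l1]
  have CS : (l1 (x - y))^2 / (∑ i, s i) ≤ ∑ i, (x i - y i)^2 / s i := by
    rw [hl1]
    have := Finset.sq_sum_div_le_sum_sq_div Finset.univ (fun i => |x i - y i|)
      (fun i _ => hs i)
    simpa [sq_abs] using this
  have hsum : ∑ i, (x i - y i)^2 / s i ≤ 2 * Dh x y := by
    rw [Dh, Finset.mul_sum]
    exact Finset.sum_le_sum fun i _ => hterm i
  have hM : ∑ i, s i ≤ max (l1 x) (l1 y) := by
    have hx1 : l1 x = ∑ i, x i := by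
      simp only [l1]; exact Finset.sum_congr rfl fun i _ => abs_of_nonneg (hx i)
    have hy1 : l1 y = ∑ i, y i := by
      simp only [l1]; exact Finset.sum_congr rfl fun i _ => abs_of_nonneg (hy i).le
    have hsum : ∑ i, s i = ((∑ i, x i) + 2 * ∑ i, y i) / 3 := by
      simp only [hsdef]
      simp [add_div, Finset.sum_add_distrib, Finset.sum_div, Finset.mul_sum, mul_div_assoc]
    have h1 : (∑ i, x i) ≤ max (l1 x) (l1 y) := hx1.symm.le.trans (le_max_left _ _)
    have h2 : (∑ i, y i) ≤ max (l1 x) (l1 y) := hy1.symm.le.trans (le_max_right _ _)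
    rw [hsum]
    linarith
  have hMpos : 0 < max (l1 x) (l1 y) := lt_of_lt_of_le hS hM
  rw [ge_iff_le, div_le_iff₀ hMpos]
  calc 1/2 * l1 (x - y) ^ 2 = (l1 (x-y))^2 / (∑ i, s i) * (∑ i, s i) / 2 := by
        field_simp
      _ ≤ (∑ i, (x i - y i)^2 / s i) * (∑ i, s i) / 2 := by
        apply div_le_div_of_nonneg_right ?_ (by norm_num)
        exact mul_le_mul_of_nonneg_right CS hS.le
      _ ≤ (2 * Dh x y) * (∑ i, s i) / 2 := by
        apply div_le_div_of_nonneg_right ?_ (by norm_num)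
        exact mul_le_mul_of_nonneg_right hsum hS.le
      _ = Dh x y * (∑ i, s i) := by ring
      _ ≤ Dh x y * max (l1 x) (l1 y) := by
        apply mul_le_mul_of_nonneg_left hM
        have : 0 ≤ ∑ i, (x i - y i)^2 / s i :=
          Finset.sum_nonneg fun i _ => div_nonneg (sq_nonneg _) (hs i).le
        linarith
end

section
/- For every x ∈ ℝ^n_+ and y ∈ ℝ^n_{++}, max{‖x‖₁, ‖y‖₁} ≤ 2·D_h(x,y) + 2·min{‖x‖₁, ‖y‖₁}. -/
open Finset Filter

lemma key_xlog (a b : ℝ) (ha : 0 ≤ a) (hb : 0 < b) :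
    2 * a - 2 * Real.sqrt a * Real.sqrt b ≤ a * Real.log (a / b) := by
  rcases eq_or_lt_of_le ha with h | ha
  · simp [← h]
  · have hsa := Real.sqrt_pos.2 ha
    have hsb := Real.sqrt_pos.2 hb
    have h1 : Real.log (Real.sqrt b / Real.sqrt a) ≤ Real.sqrt b / Real.sqrt a - 1 :=
      Real.log_le_sub_one_of_pos (div_pos hsb hsa)
    have h2 : Real.log (a / b) = 2 * Real.log (Real.sqrt a / Real.sqrt b) := by
      rw [Real.log_div (ne_of_gt hsa) (ne_of_gt hsb), Real.log_sqrt ha.le,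
        Real.log_sqrt hb.le, Real.log_div (ne_of_gt ha) (ne_of_gt hb)]
      ring
    have h3 : Real.log (Real.sqrt a / Real.sqrt b) = - Real.log (Real.sqrt b / Real.sqrt a) := by
      rw [← Real.log_inv]
      congr 1
      field_simp
    have h4 : 1 - Real.sqrt b / Real.sqrt a ≤ Real.log (Real.sqrt a / Real.sqrt b) := by
      rw [h3]; linarith
    have hsq : Real.sqrt a * Real.sqrt a = a := Real.mul_self_sqrt ha.le
    have := mul_le_mul_of_nonneg_left h4 ha.le
    rw [h2]
    have hne : Real.sqrt a ≠ 0 := ne_of_gt hsa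
    have hdiv : a * (Real.sqrt b / Real.sqrt a) = Real.sqrt a * Real.sqrt b := by
      field_simp
      nlinarith
    nlinarith

/-- For every `x ∈ ℝⁿ₊` and `y ∈ ℝⁿ₊₊`,
`max {‖x‖₁, ‖y‖₁} ≤ 2 D_h(x,y) + 2 min {‖x‖₁, ‖y‖₁}`. -/
theorem max_l1_le_two_Dh_add_two_min_l1 {n : ℕ} (x y : Fin n → ℝ)
    (hx : ∀ i, 0 ≤ x i) (hy : ∀ i, 0 < y i) :
    max (l1 x) (l1 y) ≤ 2 * Dh x y + 2 * min (l1 x) (l1 y) := by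
  have habs : l1 x = ∑ i, x i := by
    unfold l1; exact Finset.sum_congr rfl fun i _ => abs_of_nonneg (hx i)
  have habsy : l1 y = ∑ i, y i := by
    unfold l1; exact Finset.sum_congr rfl fun i _ => abs_of_nonneg (hy i).le
  rcases le_total (l1 x) (l1 y) with h | h
  · rw [max_eq_right h, min_eq_left h]
    -- need : l1 y ≤ 2 * Dh x y + 2 * l1 x, pointwise y i ≤ 2 Dᵢ + 2 x i
    rw [habs, habsy, Dh, Finset.mul_sum, Finset.mul_sum, ← Finset.sum_add_distrib]
    apply Finset.sum_le_sum
    intro i _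
    have hk := key_xlog (x i) (y i) (hx i) (hy i)
    have h1 : Real.sqrt (x i) * Real.sqrt (x i) = x i := Real.mul_self_sqrt (hx i)
    have h2 : Real.sqrt (y i) * Real.sqrt (y i) = y i := Real.mul_self_sqrt (hy i).le
    nlinarith [sq_nonneg (2 * Real.sqrt (x i) - Real.sqrt (y i))]
  · rw [max_eq_left h, min_eq_right h]
    rw [habs, habsy, Dh, Finset.mul_sum, Finset.mul_sum, ← Finset.sum_add_distrib]
    apply Finset.sum_le_sum
    intro i _
    have hk := key_xlog (x i) (y i) (hx i) (hy i)
    have h1 : Real.sqrt (x i) * Real.sqrt (x i) = x i := Real.mul_self_sqrt (hx i)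
    have h2 : Real.sqrt (y i) * Real.sqrt (y i) = y i := Real.mul_self_sqrt (hy i).le
    nlinarith [sq_nonneg (Real.sqrt (x i) - 2 * Real.sqrt (y i))]
end

section
/- For every x ∈ ℝ^n_+ and y ∈ ℝ^n_{++}, one has y_min · D_h(x,y) ≤ ‖x − y‖₂², where y_min = min_{1≤i≤n} y_i. -/
open Finset Filter

lemma term_nonneg (a b : ℝ) (ha : 0 ≤ a) (hb : 0 < b) :
    0 ≤ a * Real.log (a / b) - a + b := by
  rcases eq_or_lt_of_le ha with h | h
  · simp [← h]; positivity
  · have hlog : Real.log (b / a) ≤ b / a - 1 := Real.log_le_sub_one_of_pos (by positivity)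
    have hd : Real.log (a / b) = - Real.log (b / a) := by
      rw [← Real.log_inv]; congr 1; field_simp
    rw [hd]
    have := mul_le_mul_of_nonneg_left hlog (le_of_lt h)
    have hab : a * (b / a - 1) = b - a := by field_simp
    nlinarith
  
lemma key_ineq (a b : ℝ) (ha : 0 ≤ a) (hb : 0 < b) :
    b * (a * Real.log (a / b) - a + b) ≤ (a - b) ^ 2 := by
  rcases eq_or_lt_of_le ha with h | h
  · simp [← h]; nlinarith
  · have hlog : Real.log (a / b) ≤ a / b - 1 := Real.log_le_sub_one_of_pos (by positivity)
    have := mul_le_mul_of_nonneg_left hlog (le_of_lt (mul_pos h hb))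
    have hab : a * b * (a / b - 1) = a * a - a * b := by field_simp
    nlinarith

/-- For every `x ∈ ℝⁿ₊` and `y ∈ ℝⁿ₊₊`, `y_min · D_h(x,y) ≤ ‖x - y‖₂²`,
where `y_min = min_i y i`. -/
theorem ymin_mul_Dh_le_sq_norm {n : ℕ} [NeZero n] (x y : Fin n → ℝ)
    (hx : ∀ i, 0 ≤ x i) (hy : ∀ i, 0 < y i) :
    (Finset.univ.inf' Finset.univ_nonempty y) * Dh x y ≤ ∑ i, (x i - y i) ^ 2 := by
  set m := Finset.univ.inf' Finset.univ_nonempty y with hm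
  rw [Dh, Finset.mul_sum]
  apply Finset.sum_le_sum
  intro i _
  have hmle : m ≤ y i := Finset.inf'_le _ (Finset.mem_univ i)
  have h1 : m * (x i * Real.log (x i / y i) - x i + y i)
      ≤ y i * (x i * Real.log (x i / y i) - x i + y i) :=
    mul_le_mul_of_nonneg_right hmle (term_nonneg _ _ (hx i) (hy i))
  exact h1.trans (key_ineq _ _ (hx i) (hy i))
end

section
/- (Lower bound on the minimum entry given the Bregman divergence) Let x, y ∈ ℝ^n_{++}, and set x_min = min_i x_i and y_min = min_i y_i. If t ∈ (0,1] satisfies t − log t = 1 + D_h(x,y)/x_min, then y_min ≥ x_min · t. -/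
open Finset Filter

/-- Lower bound on the minimum entry given the Bregman divergence:
if `x, y ∈ ℝⁿ₊₊` and `t ∈ (0,1]` satisfies `t - log t = 1 + D_h(x,y)/x_min`,
then `y_min ≥ x_min · t`. -/
theorem ymin_ge_xmin_mul_t {n : ℕ} [NeZero n] (x y : Fin n → ℝ)
    (hx : ∀ i, 0 < x i) (hy : ∀ i, 0 < y i)
    (t : ℝ) (ht : t ∈ Set.Ioc (0 : ℝ) 1)
    (heq : t - Real.log t = 1 + Dh x y / (Finset.univ.inf' Finset.univ_nonempty x)) :
    Finset.univ.inf' Finset.univ_nonempty y ≥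
      (Finset.univ.inf' Finset.univ_nonempty x) * t := by
  obtain ⟨ht0, ht1⟩ := ht
  set m := Finset.univ.inf' Finset.univ_nonempty x with hm
  -- m is positive
  obtain ⟨i₀, -, hi₀⟩ := Finset.exists_mem_eq_inf' (Finset.univ_nonempty (α := Fin n)) x
  have hm_pos : 0 < m := by rw [hm, hi₀]; exact hx i₀
  have hm_le : ∀ i, m ≤ x i := fun i => Finset.inf'_le _ (Finset.mem_univ i)
  -- index attaining the min of y
  obtain ⟨j, -, hj⟩ := Finset.exists_mem_eq_inf' (Finset.univ_nonempty (α := Fin n)) y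
  rw [hj]
  by_contra hcon
  push_neg at hcon
  set a := x j with ha
  set b := y j with hbdef
  have ha_pos : 0 < a := hx j
  have hb_pos : 0 < b := hy j
  have ham : m ≤ a := hm_le j
  have hb_lt : b < m * t := hcon
  have hmt_pos : 0 < m * t := mul_pos hm_pos ht0
  -- D = m * (t - 1 - log t)
  have hD : Dh x y = m * (t - Real.log t - 1) := by
    have h : Dh x y / m = t - Real.log t - 1 := by linarith
    field_simp at h
    linarith
  -- each Bregman term is nonnegative
  have hterm : ∀ i, 0 ≤ x i * Real.log (x i / y i) - x i + y i := by
    intro i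
    have h1 : Real.log (y i / x i) ≤ y i / x i - 1 :=
      Real.log_le_sub_one_of_pos (div_pos (hy i) (hx i))
    have h2 : Real.log (x i / y i) = - Real.log (y i / x i) := by
      rw [← Real.log_inv, inv_div]
    have h3 : x i * (y i / x i) = y i := mul_div_cancel₀ _ (hx i).ne'
    have h4 : x i * Real.log (y i / x i) ≤ x i * (y i / x i - 1) :=
      mul_le_mul_of_nonneg_left h1 (hx i).le
    rw [h2]
    linarith [h3, h4]
  -- D ≥ term at j
  have hDge : a * Real.log (a / b) - a + b ≤ Dh x y := by
    rw [Dh]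
    exact Finset.single_le_sum (fun i _ => hterm i) (Finset.mem_univ j)
  have hlog_ab : Real.log (a / b) = Real.log a - Real.log b :=
    Real.log_div ha_pos.ne' hb_pos.ne'
  rw [hlog_ab] at hDge
  -- ratio r = b/(m t)
  have hr_pos : 0 < b / (m * t) := div_pos hb_pos hmt_pos
  have hr_lt : b / (m * t) < 1 := (div_lt_one hmt_pos).mpr hb_lt
  set r := b / (m * t) with hr
  have hbr : b = m * t * r := by rw [hr]; exact (mul_div_cancel₀ b hmt_pos.ne').symm
  -- key log inequalities
  have h1 : Real.log b - Real.log m - Real.log t < r - 1 := by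
    have h := Real.log_lt_sub_one_of_pos hr_pos hr_lt.ne
    rw [hr] at h ⊢
    rw [Real.log_div hb_pos.ne' hmt_pos.ne',
      Real.log_mul hm_pos.ne' ht0.ne'] at h
    linarith
  have h2 : Real.log m - Real.log a ≤ m / a - 1 := by
    have h := Real.log_le_sub_one_of_pos (div_pos hm_pos ha_pos)
    rwa [Real.log_div hm_pos.ne' ha_pos.ne'] at h
  have h2' : a * Real.log m - a * Real.log a ≤ m - a := by
    have h := mul_le_mul_of_nonneg_left h2 ha_pos.le
    have hma : a * (m / a) = m := mul_div_cancel₀ _ ha_pos.ne'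
    linarith
  have h3 : Real.log t ≤ 0 := Real.log_nonpos ht0.le ht1
  -- assemble the contradiction
  have hB : a * Real.log b <
      a * Real.log m + a * Real.log t + a * r - a := by
    have h := mul_lt_mul_of_pos_left h1 ha_pos
    linarith
  have hpos1 : 0 ≤ 1 - Real.log t - r := by linarith
  have hC : 0 ≤ a - a * Real.log t - a * r - m + m * Real.log t + m * r := by
    linarith [mul_nonneg (sub_nonneg.mpr ham) hpos1]
  have hE : 0 ≤ m - m * r - m * t + m * r * t := by
    linarith [mul_nonneg (mul_nonneg hm_pos.le (by linarith : (0:ℝ) ≤ 1 - r))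
      (by linarith : (0:ℝ) ≤ 1 - t)]
  have hfinal : a * (Real.log a - Real.log b) - a + b > m * (t - Real.log t - 1) := by
    linarith [h2', hB, hC, hE, hbr]
  linarith [hDge, hD, hfinal]
end

section
/- Let x ∈ ℝ^n_{++}, g ∈ ℝ^n and α > 0 satisfy α·‖g‖_∞ ≤ 1.79, and set x⁺ = x ∘ exp(−α g) (componentwise). Then D_h(x, x⁺) ≤ α² · ∑_{i=1}^n x_i g_i². -/
open Finset Filter

/-- Key scalar inequality: `exp s ≤ 1 + s + s²` for all `s ≤ 1.79`. -/
lemma exp_key {s : ℝ} (hs : s ≤ 1.79) : Real.exp s ≤ 1 + s + s ^ 2 := by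
  rcases le_or_gt s 0 with h0 | h0
  · have h1 : (-s) + 1 ≤ Real.exp (-s) := Real.add_one_le_exp _
    have h2 : Real.exp s * Real.exp (-s) = 1 := by
      rw [← Real.exp_add]; simp
    nlinarith [Real.exp_pos s, sq_nonneg s, Real.exp_pos (-s)]
  rcases le_or_gt s 1 with h1 | h1
  · have hb := Real.exp_bound' h0.le h1 (n := 3) (by norm_num)
    simp [Finset.sum_range_succ, Nat.factorial] at hb
    nlinarith [pow_nonneg h0.le 3, sq_nonneg s]
  · set t := s - 1 with ht
    have ht0 : 0 ≤ t := by simp [ht]; linarith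
    have ht1 : t ≤ 0.79 := by simp [ht]; linarith
    have hb := Real.exp_bound' ht0 (by linarith : t ≤ 1) (n := 5) (by norm_num)
    simp [Finset.sum_range_succ, Nat.factorial] at hb
    have he : Real.exp s = Real.exp 1 * Real.exp t := by
      rw [← Real.exp_add, ht]; ring_nf
    have he1 : Real.exp 1 < 2.7182818286 := Real.exp_one_lt_d9
    have hs1 : s = 1 + t := by rw [ht]; ring_nf
    rw [he, hs1]
    nlinarith [pow_nonneg ht0 2, pow_nonneg ht0 3, pow_nonneg ht0 4, pow_nonneg ht0 5,
      mul_nonneg (pow_nonneg ht0 4) (sub_nonneg.2 ht1),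
      mul_nonneg (pow_nonneg ht0 3) (sub_nonneg.2 ht1),
      mul_nonneg (pow_nonneg ht0 2) (sub_nonneg.2 ht1),
      mul_nonneg ht0 (sub_nonneg.2 ht1), Real.exp_pos (1:ℝ)]

/-- One-step bound: if `x ∈ ℝⁿ₊₊`, `α > 0` with `α ‖g‖_∞ ≤ 1.79`, and
`x⁺ = x ∘ exp(-α g)`, then `D_h(x, x⁺) ≤ α² ∑ i, x i * (g i)²`. -/
theorem Dh_step_le {n : ℕ} [NeZero n] (x g : Fin n → ℝ) (α : ℝ)
    (hx : ∀ i, 0 < x i) (hα : 0 < α)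
    (hstep : α * (Finset.univ.sup' Finset.univ_nonempty fun i => |g i|) ≤ 1.79) :
    Dh x (fun i => x i * Real.exp (-α * g i)) ≤ α ^ 2 * ∑ i, x i * (g i) ^ 2 := by
  rw [Dh, Finset.mul_sum]
  apply Finset.sum_le_sum
  intro i _
  have hxi := hx i
  have hlog : Real.log (x i / (x i * Real.exp (-α * g i))) = α * g i := by
    rw [div_mul_eq_div_div, div_self hxi.ne', one_div, Real.log_inv, Real.log_exp]
    ring
  rw [hlog]
  have hgi : |g i| ≤ Finset.univ.sup' Finset.univ_nonempty fun i => |g i| :=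
    Finset.le_sup' (fun j => |g j|) (Finset.mem_univ i)
  have hb : -(α * g i) ≤ 1.79 := by
    have : α * g i ≥ -(α * |g i|) := by
      have := neg_abs_le (g i)
      nlinarith
    nlinarith
  have hexp := exp_key hb
  have : Real.exp (-α * g i) ≤ 1 - α * g i + (α * g i) ^ 2 := by
    have h2 : (-(α * g i)) ^ 2 = (α * g i) ^ 2 := by ring
    calc Real.exp (-α * g i) = Real.exp (-(α * g i)) := by ring_nf
      _ ≤ 1 + (-(α * g i)) + (-(α * g i)) ^ 2 := hexp
      _ = 1 - α * g i + (α * g i) ^ 2 := by ring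
  nlinarith [hxi.le, sq_nonneg (g i)]
end

section
/- (Lower bound on the Polyak-type stepsize) Let A ∈ ℝ^{m×n} with A ≠ 0, b ∈ ℝ^m, f(x) = (1/2)‖Ax − b‖₂², and let z ∈ S₊. Let x ∈ ℝ^n_{++} with ∇f(x) ≠ 0 and α = min{ f(x)/‖∇f(x)‖²_x , 1.79/‖∇f(x)‖_∞ }. Then α ≥ 1 / ( 4·C_A²·( D_h(z,x) + ‖z‖₁ ) ), where C_A = max_{1≤j≤n} ‖A_{:j}‖₂ is the maximum Euclidean column norm of A. -/
open Finset Filter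

/-- Objective `f(x) = (1/2) ‖Ax - b‖₂²`. -/
noncomputable def fobj {m n : ℕ} (A : Matrix (Fin m) (Fin n) ℝ) (b : Fin m → ℝ)
    (x : Fin n → ℝ) : ℝ := (1 / 2) * ∑ j, ((A.mulVec x - b) j) ^ 2

/-- Gradient `∇f(x) = Aᵀ (Ax - b)` of `f(x) = (1/2)‖Ax - b‖₂²`. -/
noncomputable def gradf {m n : ℕ} (A : Matrix (Fin m) (Fin n) ℝ) (b : Fin m → ℝ)
    (x : Fin n → ℝ) : Fin n → ℝ := A.transpose.mulVec (A.mulVec x - b)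

/-- Maximum norm `‖v‖_∞`. -/
noncomputable def linfty {n : ℕ} [NeZero n] (v : Fin n → ℝ) : ℝ :=
  Finset.univ.sup' Finset.univ_nonempty fun i => |v i|

/-- Weighted squared norm `‖v‖²_x = ∑ i, x i * (v i)²`. -/
noncomputable def wnormSq {n : ℕ} (x v : Fin n → ℝ) : ℝ := ∑ i, x i * (v i) ^ 2

/-- The Polyak-type stepsize `min { f(x)/‖∇f(x)‖²_x , 1.79/‖∇f(x)‖_∞ }`. -/
noncomputable def polyakStep {m n : ℕ} [NeZero n] (A : Matrix (Fin m) (Fin n) ℝ)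
    (b : Fin m → ℝ) (x : Fin n → ℝ) : ℝ :=
  min (fobj A b x / wnormSq x (gradf A b x)) (1.79 / linfty (gradf A b x))

/-- Maximum Euclidean column norm `C_A = max_j ‖A_{:j}‖₂`. -/
noncomputable def colNormMax {m n : ℕ} [NeZero n] (A : Matrix (Fin m) (Fin n) ℝ) : ℝ :=
  Finset.univ.sup' Finset.univ_nonempty fun j => Real.sqrt (∑ i, (A i j) ^ 2)

lemma aux_nonneg (zz xx : ℝ) (hz : 0 ≤ zz) (hx : 0 < xx) :
    0 ≤ zz * Real.log (zz / xx) - zz + xx := by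
  rcases eq_or_lt_of_le hz with h | h
  · simp [← h]; exact hx.le
  · have hxz : 0 < xx / zz := div_pos hx h
    have h1 := Real.log_le_sub_one_of_pos hxz
    have hrev : Real.log (zz / xx) = - Real.log (xx / zz) := by
      rw [← Real.log_inv, inv_div]
    rw [hrev]
    have h2 : zz * Real.log (xx / zz) ≤ zz * (xx / zz - 1) :=
      mul_le_mul_of_nonneg_left h1 h.le
    have h3 : zz * (xx / zz - 1) = xx - zz := by field_simp
    nlinarith
lemma aux_up (zz xx : ℝ) (hz : 0 ≤ zz) (hx : 0 < xx) :
    xx ≤ 2 * (zz * Real.log (zz / xx) - zz + xx) + 2 * zz := by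
  rcases eq_or_lt_of_le hz with h | h
  · simp [← h]; linarith [hx.le]
  · have hxz : 0 < xx / zz := div_pos hx h
    have hs : 0 < Real.sqrt (xx / zz) := Real.sqrt_pos.2 hxz
    have h1 := Real.log_le_sub_one_of_pos hs
    have h2 : Real.log (Real.sqrt (xx / zz)) = Real.log (xx / zz) / 2 :=
      Real.log_sqrt hxz.le
    have hlog : Real.log (xx / zz) ≤ 2 * Real.sqrt (xx / zz) - 2 := by linarith
    have hrev : Real.log (zz / xx) = - Real.log (xx / zz) := by
      rw [← Real.log_inv, inv_div]
    have h3 : Real.sqrt zz * Real.sqrt (xx / zz) = Real.sqrt xx := by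
      rw [← Real.sqrt_mul h.le, mul_div_cancel₀ _ (ne_of_gt h)]
    have h4 : zz * Real.sqrt (xx / zz) = Real.sqrt zz * Real.sqrt xx := by
      calc zz * Real.sqrt (xx / zz) = Real.sqrt zz * (Real.sqrt zz * Real.sqrt (xx/zz)) := by
            rw [← mul_assoc, Real.mul_self_sqrt h.le]
        _ = Real.sqrt zz * Real.sqrt xx := by rw [h3]
    have hz2 : Real.sqrt zz ^ 2 = zz := Real.sq_sqrt h.le
    have hx2 : Real.sqrt xx ^ 2 = xx := Real.sq_sqrt hx.le
    have h5 : zz * Real.log (xx / zz) ≤ zz * (2 * Real.sqrt (xx / zz) - 2) :=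
      mul_le_mul_of_nonneg_left hlog h.le
    rw [hrev]
    nlinarith [sq_nonneg (Real.sqrt xx - 2 * Real.sqrt zz)]

/-- Lower bound on the Polyak-type stepsize: for `A ≠ 0`, `z ∈ S₊`, `x ∈ ℝⁿ₊₊`
with `∇f(x) ≠ 0`, one has `α ≥ 1 / (4 C_A² (D_h(z,x) + ‖z‖₁))`, where
`C_A = max_j ‖A_{:j}‖₂`. -/
theorem polyakStep_lower_bound {m n : ℕ} [NeZero n]
    (A : Matrix (Fin m) (Fin n) ℝ) (hA : A ≠ 0) (b : Fin m → ℝ)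
    (z : Fin n → ℝ) (hz : ∀ i, 0 ≤ z i) (hzsol : A.mulVec z = b)
    (x : Fin n → ℝ) (hx : ∀ i, 0 < x i) (hgrad : gradf A b x ≠ 0) :
    polyakStep A b x ≥ 1 / (4 * (colNormMax A) ^ 2 * (Dh z x + l1 z)) := by
  have hDh : 0 ≤ Dh z x :=
    Finset.sum_nonneg fun i _ => aux_nonneg _ _ (hz i) (hx i)
  have hl1 : 0 ≤ l1 z := Finset.sum_nonneg fun i _ => abs_nonneg _
  set S := Dh z x + l1 z with hSdef
  set C := colNormMax A with hCdef
  -- sum of x bound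
  have hxS : ∑ i, x i ≤ 2 * S := by
    have h1 : ∑ i, x i ≤ ∑ i, (2 * (z i * Real.log (z i / x i) - z i + x i) + 2 * z i) :=
      Finset.sum_le_sum fun i _ => aux_up _ _ (hz i) (hx i)
    have h2 : ∑ i, (2 * (z i * Real.log (z i / x i) - z i + x i) + 2 * z i)
        = 2 * Dh z x + 2 * ∑ i, z i := by
      rw [Dh, Finset.sum_add_distrib, ← Finset.mul_sum, ← Finset.mul_sum]
    have h3 : ∑ i, z i ≤ l1 z :=
      Finset.sum_le_sum fun i _ => le_abs_self _
    rw [hSdef]; linarith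
  have hxpos : 0 < ∑ i, x i := Finset.sum_pos (fun i _ => hx i) Finset.univ_nonempty
  have hS : 0 < S := by linarith
  -- positivity of C
  have hCnn : ∀ j, Real.sqrt (∑ i, (A i j) ^ 2) ≤ C := fun j =>
    Finset.le_sup' (fun j => Real.sqrt (∑ i, (A i j) ^ 2)) (mem_univ j)
  have hC : 0 < C := by
    obtain ⟨i0, j0, hij⟩ : ∃ i j, A i j ≠ 0 := by
      by_contra h; push_neg at h
      exact hA (by ext i j; simpa using h i j)
    have h1 : (0:ℝ) < ∑ i, (A i j0) ^ 2 :=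
      Finset.sum_pos' (fun i _ => sq_nonneg _) ⟨i0, mem_univ _, by positivity⟩
    exact lt_of_lt_of_le (Real.sqrt_pos.2 h1) (hCnn j0)
  set r : Fin m → ℝ := A.mulVec x - b with hr
  set g : Fin n → ℝ := gradf A b x with hg
  have hgj : ∀ j, g j = ∑ i, A i j * r i := by
    intro j
    simp [hg, gradf, Matrix.mulVec, dotProduct, Matrix.transpose_apply, hr]
  have hrz : ∀ i, r i = ∑ j, (x j - z j) * A i j := by
    intro i
    rw [hr]
    simp only [Pi.sub_apply, ← hzsol, Matrix.mulVec, dotProduct]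
    rw [← Finset.sum_sub_distrib]
    exact Finset.sum_congr rfl fun j _ => by ring
  set R := Real.sqrt (∑ i, r i ^ 2) with hRdef
  have hR0 : 0 ≤ R := Real.sqrt_nonneg _
  -- grad bound
  have hgb : ∀ j, |g j| ≤ C * R := by
    intro j
    have h1 : (g j) ^ 2 ≤ (∑ i, (A i j) ^ 2) * (∑ i, r i ^ 2) := by
      rw [hgj j]; exact Finset.sum_mul_sq_le_sq_mul_sq _ _ _
    have h2 : |g j| ≤ Real.sqrt ((∑ i, (A i j) ^ 2) * (∑ i, r i ^ 2)) := by
      rw [← Real.sqrt_sq_eq_abs]; exact Real.sqrt_le_sqrt h1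
    rw [Real.sqrt_mul (Finset.sum_nonneg fun i _ => sq_nonneg _)] at h2
    exact h2.trans (mul_le_mul_of_nonneg_right (hCnn j) hR0)
  -- R bound
  have hRb : R ≤ C * (3 * S) := by
    set v : Fin n → EuclideanSpace ℝ (Fin m) := fun j => WithLp.toLp 2 (fun i => (x j - z j) * A i j) with hv
    have hsum : ∀ i, (∑ j, v j) i = r i := by
      intro i
      rw [WithLp.ofLp_sum, Finset.sum_apply, hrz i]
    have hnorm : ‖(∑ j, v j : EuclideanSpace ℝ (Fin m))‖ = R := by
      rw [EuclideanSpace.norm_eq, hRdef]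
      congr 1
      exact Finset.sum_congr rfl fun i _ => by rw [hsum i, Real.norm_eq_abs, sq_abs]
    have hnv : ∀ j, ‖v j‖ ≤ |x j - z j| * C := by
      intro j
      rw [EuclideanSpace.norm_eq]
      have h1 : ∑ i, ‖(x j - z j) * A i j‖ ^ 2 = (x j - z j) ^ 2 * ∑ i, (A i j) ^ 2 := by
        rw [Finset.mul_sum]
        exact Finset.sum_congr rfl fun i _ => by
          rw [Real.norm_eq_abs, abs_mul, mul_pow, sq_abs, sq_abs]
      have h2 : ∀ i, ‖v j i‖ ^ 2 = ‖(x j - z j) * A i j‖ ^ 2 := fun i => by rw [hv]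
      calc Real.sqrt (∑ i, ‖v j i‖ ^ 2)
          = Real.sqrt ((x j - z j) ^ 2 * ∑ i, (A i j) ^ 2) := by
            rw [← h1]
        _ = |x j - z j| * Real.sqrt (∑ i, (A i j) ^ 2) := by
            rw [Real.sqrt_mul (sq_nonneg _), Real.sqrt_sq_eq_abs]
        _ ≤ |x j - z j| * C := mul_le_mul_of_nonneg_left (hCnn j) (abs_nonneg _)
    have hc3 : ∑ j, |x j - z j| ≤ 3 * S := by
      have h1 : ∀ j, |x j - z j| ≤ x j + |z j| := by
        intro j
        calc |x j - z j| ≤ |x j| + |z j| := abs_sub _ _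
          _ = x j + |z j| := by rw [abs_of_pos (hx j)]
      have h2 : ∑ j, |x j - z j| ≤ ∑ j, (x j + |z j|) :=
        Finset.sum_le_sum fun j _ => h1 j
      rw [Finset.sum_add_distrib] at h2
      have h4 : ∑ j, |z j| = l1 z := rfl
      rw [h4] at h2
      linarith
    calc R = ‖(∑ j, v j : EuclideanSpace ℝ (Fin m))‖ := hnorm.symm
      _ ≤ ∑ j, ‖v j‖ := norm_sum_le _ _
      _ ≤ ∑ j, |x j - z j| * C := Finset.sum_le_sum fun j _ => hnv j
      _ = (∑ j, |x j - z j|) * C := by rw [← Finset.sum_mul]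
      _ ≤ (3 * S) * C := mul_le_mul_of_nonneg_right hc3 hC.le
      _ = C * (3 * S) := by ring
  -- f in terms of R
  have hfR : fobj A b x = R ^ 2 / 2 := by
    rw [fobj, hRdef, Real.sq_sqrt (Finset.sum_nonneg fun i _ => sq_nonneg _)]
    rw [← hr]; ring
  -- nonvanishing index for g
  obtain ⟨j0, hj0⟩ : ∃ j, g j ≠ 0 := Function.ne_iff.1 hgrad
  -- r ≠ 0 hence f > 0
  have hrne : ∃ i, r i ≠ 0 := by
    by_contra h; push_neg at h
    apply hj0
    rw [hgj j0]
    exact Finset.sum_eq_zero fun i _ => by rw [h i, mul_zero]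
  obtain ⟨i0, hi0⟩ := hrne
  have hRsqpos : 0 < ∑ i, r i ^ 2 :=
    Finset.sum_pos' (fun i _ => sq_nonneg _) ⟨i0, mem_univ _, by positivity⟩
  have hRpos : 0 < R := Real.sqrt_pos.2 hRsqpos
  have hfpos : 0 < fobj A b x := by rw [hfR]; positivity
  -- wnormSq bounds
  have hWpos : 0 < wnormSq x g :=
    Finset.sum_pos' (fun i _ => mul_nonneg (hx i).le (sq_nonneg _))
      ⟨j0, mem_univ _, mul_pos (hx j0) (by positivity)⟩
  have hW : wnormSq x g ≤ 4 * C ^ 2 * S * fobj A b x := by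
    have h1 : wnormSq x g ≤ ∑ i, x i * (C * R) ^ 2 := by
      rw [wnormSq]
      refine Finset.sum_le_sum fun i _ => ?_
      refine mul_le_mul_of_nonneg_left ?_ (hx i).le
      calc (g i) ^ 2 = |g i| ^ 2 := (sq_abs _).symm
        _ ≤ (C * R) ^ 2 := by
            have := hgb i
            nlinarith [abs_nonneg (g i)]
    have h2 : ∑ i, x i * (C * R) ^ 2 = (∑ i, x i) * (C * R) ^ 2 := by
      rw [← Finset.sum_mul]
    have h3 : (∑ i, x i) * (C * R) ^ 2 ≤ 2 * S * (C * R) ^ 2 :=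
      mul_le_mul_of_nonneg_right hxS (sq_nonneg _)
    calc wnormSq x g ≤ (∑ i, x i) * (C * R) ^ 2 := by rw [← h2]; exact h1
      _ ≤ 2 * S * (C * R) ^ 2 := h3
      _ = 4 * C ^ 2 * S * (R ^ 2 / 2) := by ring
      _ = 4 * C ^ 2 * S * fobj A b x := by rw [hfR]
  -- linfty bounds
  have hLpos : 0 < linfty g :=
    lt_of_lt_of_le (abs_pos.2 hj0)
      (Finset.le_sup' (fun i => |g i|) (mem_univ j0))
  have hL : linfty g ≤ 3 * C ^ 2 * S := by
    rw [linfty]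
    refine Finset.sup'_le _ _ fun j _ => ?_
    calc |g j| ≤ C * R := hgb j
      _ ≤ C * (C * (3 * S)) := mul_le_mul_of_nonneg_left hRb hC.le
      _ = 3 * C ^ 2 * S := by ring
  -- conclusion
  have hden : 0 < 4 * C ^ 2 * S := by positivity
  rw [ge_iff_le, polyakStep, le_min_iff]
  constructor
  · rw [div_le_div_iff₀ hden hWpos]
    nlinarith [hW]
  · rw [div_le_div_iff₀ hden hLpos]
    nlinarith [hL, hden]
end

section
/- (Convergence of entropic mirror descent with Polyak-type stepsizes) Let A ∈ ℝ^{m×n} with A ≠ 0 and b ∈ ℝ^m be such that S₊ is nonempty, and let f(x) = (1/2)‖Ax − b‖₂². Let x₀ ∈ ℝ^n_{++} and define recursively x_{k+1} = x_k ∘ exp(−α_k ∇f(x_k)) with α_k = min{ f(x_k)/‖∇f(x_k)‖²_{x_k} , 1.79/‖∇f(x_k)‖_∞ }, assuming ∇f(x_k) ≠ 0 for all k. Then (x_k) converges to some x* ∈ S₊, and for every k ∈ ℕ, min_{0≤i≤k} f(x_i) ≤ 4·R·(R + ‖x*‖₁)·C_A² / (k+1), where R = D_h(x*, x₀) and C_A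 = max_{1≤j≤n} ‖A_{:j}‖₂ is the maximum Euclidean column norm of A. -/
open Finset Filter

/-! ### Auxiliary analytic lemmas -/

section analytic

private lemma exp_quad_ub {u : ℝ} (hu : u ≤ 1.79) : Real.exp u ≤ 1 + u + u ^ 2 := by
  rcases le_or_gt u 0 with h0 | h0
  · rcases le_or_gt u (-1) with h1 | h1
    · have := Real.exp_le_one_iff.mpr h0
      nlinarith
    · have h2 : 1 - u ≤ Real.exp (-u) := by have := Real.add_one_le_exp (-u); linarith
      have h3 : Real.exp u * Real.exp (-u) = 1 := by rw [← Real.exp_add]; simp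
      have h4 : (0:ℝ) < Real.exp u := Real.exp_pos u
      have h5 : Real.exp u * (1 - u) ≤ 1 := by
        calc Real.exp u * (1 - u) ≤ Real.exp u * Real.exp (-u) :=
          mul_le_mul_of_nonneg_left h2 h4.le
        _ = 1 := h3
      nlinarith
  · have hy : |u/2| ≤ 1 := by rw [abs_of_pos (by linarith)]; linarith
    have hb := Real.exp_bound hy (by norm_num : 0 < 5)
    have hsum : ∑ m ∈ Finset.range 5, (u/2) ^ m / (m.factorial : ℝ)
        = 1 + u/2 + (u/2)^2/2 + (u/2)^3/6 + (u/2)^4/24 := by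
      simp [Finset.sum_range_succ, Nat.factorial]
    rw [hsum, abs_of_pos (by linarith : (0:ℝ) < u/2)] at hb
    have hb5 : Real.exp (u/2) ≤ 1 + u/2 + (u/2)^2/2 + (u/2)^3/6 + (u/2)^4/24 + (u/2)^5/100 := by
      have h7 := (abs_le.mp hb).2
      have h6 : ((5:ℕ).succ : ℝ) / ((5:ℕ).factorial * (5:ℕ)) = 1/100 := by
        norm_num [Nat.factorial]
      rw [h6] at h7; linarith
    have hsq : Real.exp u = Real.exp (u/2) * Real.exp (u/2) := by
      rw [← Real.exp_add]; ring_nf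
    have hpos : (0:ℝ) < Real.exp (u/2) := Real.exp_pos _
    have h1 : u^1 ≤ (1.79:ℝ)^1 := by nlinarith
    have h2 : u^2 ≤ (1.79:ℝ)^2 := pow_le_pow_left₀ h0.le hu 2
    have h3 : u^3 ≤ (1.79:ℝ)^3 := pow_le_pow_left₀ h0.le hu 3
    have h4 : u^4 ≤ (1.79:ℝ)^4 := pow_le_pow_left₀ h0.le hu 4
    have h5 : u^5 ≤ (1.79:ℝ)^5 := pow_le_pow_left₀ h0.le hu 5
    have h6 : u^6 ≤ (1.79:ℝ)^6 := pow_le_pow_left₀ h0.le hu 6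
    have h7 : u^7 ≤ (1.79:ℝ)^7 := pow_le_pow_left₀ h0.le hu 7
    have h8 : u^8 ≤ (1.79:ℝ)^8 := pow_le_pow_left₀ h0.le hu 8
    have e_nonneg : 0 ≤ 1/2 - u/6 - u^2/24 - (27/3200)*u^3 - (161/115200)*u^4
        - (43/230400)*u^5 - (73/3686400)*u^6 - (1/614400)*u^7 - (1/10240000)*u^8 := by
      norm_num at h1 h2 h3 h4 h5 h6 h7 h8 ⊢
      linarith
    have key : (1 + u/2 + (u/2)^2/2 + (u/2)^3/6 + (u/2)^4/24 + (u/2)^5/100)^2 ≤ 1 + u + u^2 := by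
      nlinarith [mul_nonneg (sq_nonneg u) e_nonneg]
    calc Real.exp u = Real.exp (u/2) * Real.exp (u/2) := hsq
      _ ≤ (1 + u/2 + (u/2)^2/2 + (u/2)^3/6 + (u/2)^4/24 + (u/2)^5/100)^2 := by
          rw [sq]; exact mul_le_mul hb5 hb5 hpos.le (by nlinarith)
      _ ≤ 1 + u + u^2 := key

private lemma exp_neg_lb {s : ℝ} (h0 : 0 ≤ s) (h1 : s ≤ 1) :
    s^2/6 ≤ Real.exp (-s) - 1 + s := by
  have hy : |s| ≤ 1 := by rw [abs_of_nonneg h0]; exact h1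
  have hb := Real.exp_bound hy (by norm_num : 0 < 3)
  have hsum : ∑ m ∈ Finset.range 3, s ^ m / (m.factorial : ℝ) = 1 + s + s^2/2 := by
    simp [Finset.sum_range_succ, Nat.factorial]
  rw [hsum, abs_of_nonneg h0] at hb
  have hQ : Real.exp s ≤ 1 + s + s^2/2 + (2/9)*s^3 := by
    have h7 := (abs_le.mp hb).2
    have h6 : ((3:ℕ).succ : ℝ) / ((3:ℕ).factorial * (3:ℕ)) = 2/9 := by
      norm_num [Nat.factorial]
    rw [h6] at h7; linarith
  have hQpos : (0:ℝ) < 1 + s + s^2/2 + (2/9)*s^3 := by nlinarith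
  have hepos : (0:ℝ) < Real.exp s := Real.exp_pos s
  have hinv : 1 / (1 + s + s^2/2 + (2/9)*s^3) ≤ Real.exp (-s) := by
    rw [Real.exp_neg, ← one_div]
    exact one_div_le_one_div_of_le hepos hQ
  have hprod : (1 + s + s^2/2 + (2/9)*s^3) * (1 - s + s^2/6) ≤ 1 := by
    nlinarith [pow_le_pow_left₀ h0 h1 4, sq_nonneg s, pow_nonneg h0 4, pow_nonneg h0 5]
  have : 1 - s + s^2/6 ≤ 1 / (1 + s + s^2/2 + (2/9)*s^3) := by
    rw [le_div_iff₀ hQpos]; linarith [hprod]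
  linarith [le_trans this hinv]

/-- If `exp (u k) - 1 - (u k) → 0` then `u k → 0`. -/
private lemma tendsto_of_exp_sub {u : ℕ → ℝ}
    (h : Filter.Tendsto (fun k => Real.exp (u k) - 1 - u k) Filter.atTop (nhds 0)) :
    Filter.Tendsto u Filter.atTop (nhds 0) := by
  rw [Metric.tendsto_atTop] at h ⊢
  intro ε hε
  set δ := min ε 1 with hδdef
  have hδpos : 0 < δ := lt_min hε one_pos
  have hδ1 : δ ≤ 1 := min_le_right _ _
  obtain ⟨N, hN⟩ := h (δ^2/6) (by positivity)
  refine ⟨N, fun k hk => ?_⟩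
  have hfk := hN k hk
  simp only [Real.dist_eq, sub_zero] at hfk ⊢
  have hfk' : Real.exp (u k) - 1 - u k < δ^2/6 := by
    have := (abs_lt.mp hfk).2; linarith
  have hnn : 0 ≤ Real.exp (u k) - 1 - u k := by
    have := Real.add_one_le_exp (u k); linarith
  have habs : |u k| < δ := by
    set t := u k with ht
    rcases le_or_gt 0 t with hpos | hneg
    · have e1 : 1 + t/2 ≤ Real.exp (t/2) := by have := Real.add_one_le_exp (t/2); linarith
      have e2 : (1 + t/2) * (1 + t/2) ≤ Real.exp (t/2) * Real.exp (t/2) :=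
        mul_le_mul e1 e1 (by linarith) (Real.exp_pos _).le
      have e3 : Real.exp (t/2) * Real.exp (t/2) = Real.exp t := by
        rw [← Real.exp_add]; ring_nf
      have e4 : t^2/4 ≤ Real.exp t - 1 - t := by nlinarith
      have : t^2 < δ^2 := by nlinarith
      rw [abs_of_nonneg hpos]
      nlinarith
    · set s := -t with hs
      have hs0 : 0 < s := by simp [hs]; linarith
      rcases le_or_gt s 1 with hs1 | hs1
      · have := exp_neg_lb hs0.le hs1
        have hes : Real.exp (-s) = Real.exp t := by simp [hs]
        have : s^2/6 ≤ Real.exp t - 1 - t := by rw [← hes]; simp [hs] at this ⊢; linarith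
        have hss : s^2 < δ^2 := by nlinarith
        have : s < δ := by nlinarith
        rw [abs_of_neg hneg]; simpa [hs] using this
      · exfalso
        have het : Real.exp t = Real.exp (-s) := by simp [hs]
        rcases le_or_gt s (7/6) with hs2 | hs2
        · have e1 : Real.exp (-(7/6:ℝ)) ≤ Real.exp (-s) := Real.exp_le_exp.mpr (by linarith)
          have e2 : Real.exp ((7:ℝ)/6) ≤ 1 + 7/6 + (7/6)^2 :=
            @exp_quad_ub (7/6) (by norm_num)
          have e3 : (1:ℝ)/6 ≤ Real.exp (-(7/6:ℝ)) := by
            rw [Real.exp_neg, ← one_div]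
            rw [div_le_div_iff₀ (by norm_num) (Real.exp_pos _)]
            nlinarith
          have e4 : Real.exp t - 1 - t ≥ 1/6 + (s - 1) := by
            rw [het]; simp only [ge_iff_le]
            have : -t = s := by simp [hs]
            nlinarith [e1, e3]
          nlinarith [hδ1, hδpos]
        · have : Real.exp t - 1 - t ≥ s - 1 := by
            rw [het]; have := (Real.exp_pos (-s)).le; simp [hs]; linarith
          have : (1:ℝ)/6 ≤ Real.exp t - 1 - t := by linarith
          nlinarith [hδ1, hδpos]
  calc |u k| < δ := habs
    _ ≤ ε := min_le_left _ _

end analytic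

/-! ### Auxiliary structural lemmas -/

section basics
variable {m n : ℕ} [NeZero n] (A : Matrix (Fin m) (Fin n) ℝ) (b : Fin m → ℝ)

set_option linter.unusedSectionVars false

private lemma gradf_apply (v : Fin n → ℝ) (i : Fin n) :
    gradf A b v i = ∑ j, A j i * (A.mulVec v - b) j := by
  simp [gradf, Matrix.mulVec, dotProduct, Matrix.transpose_apply]

private lemma fobj_nonneg (v : Fin n → ℝ) : 0 ≤ fobj A b v := by
  unfold fobj; positivity

private lemma fobj_pos (v : Fin n → ℝ) (h : gradf A b v ≠ 0) : 0 < fobj A b v := by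
  rcases (fobj_nonneg A b v).lt_or_eq with h' | h'
  · exact h'
  · exfalso; apply h
    have hz : ∀ j, (A.mulVec v - b) j = 0 := by
      have hsum : ∑ j, ((A.mulVec v - b) j) ^ 2 = 0 := by
        unfold fobj at h'; linarith
      intro j
      have := (Finset.sum_eq_zero_iff_of_nonneg
        (fun j _ => sq_nonneg ((A.mulVec v - b) j))).mp hsum j (mem_univ j)
      exact pow_eq_zero_iff (by norm_num) |>.mp this
    funext i
    rw [gradf_apply]
    simp only [Pi.zero_apply]
    exact Finset.sum_eq_zero fun j _ => by rw [hz j, mul_zero]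

private lemma grad_inner (v z : Fin n → ℝ) (hAz : A.mulVec z = b) :
    ∑ i, gradf A b v i * (v i - z i) = 2 * fobj A b v := by
  have h1 : ∀ i, gradf A b v i * (v i - z i)
      = ∑ j, (A.mulVec v - b) j * (A j i * (v i - z i)) := by
    intro i; rw [gradf_apply, Finset.sum_mul]
    exact Finset.sum_congr rfl fun j _ => by ring
  simp_rw [h1]
  rw [Finset.sum_comm]
  have h2 : ∀ j, ∑ i, (A.mulVec v - b) j * (A j i * (v i - z i))
      = ((A.mulVec v - b) j) ^ 2 := by
    intro j
    rw [← Finset.mul_sum]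
    have : ∑ i, A j i * (v i - z i) = (A.mulVec v - b) j := by
      have hv : (A.mulVec v) j = ∑ i, A j i * v i := by
        simp [Matrix.mulVec, dotProduct]
      have hzz : (A.mulVec z) j = ∑ i, A j i * z i := by
        simp [Matrix.mulVec, dotProduct]
      simp only [Pi.sub_apply, hv, ← hAz, hzz, ← Finset.sum_sub_distrib]
      exact Finset.sum_congr rfl fun i _ => by ring
    rw [this]; ring
  rw [Finset.sum_congr rfl fun j _ => h2 j]
  unfold fobj; ring

private lemma colNormMax_nonneg : 0 ≤ colNormMax A := by
  have : (Finset.univ : Finset (Fin n)).Nonempty := Finset.univ_nonempty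
  obtain ⟨j, _⟩ := this
  unfold colNormMax
  exact le_trans (Real.sqrt_nonneg (∑ i, (A i j) ^ 2))
    (Finset.le_sup' (fun j => Real.sqrt (∑ i, (A i j) ^ 2)) (mem_univ j))

private lemma colsq_le (j : Fin n) : ∑ i, (A i j) ^ 2 ≤ (colNormMax A) ^ 2 := by
  have h1 : Real.sqrt (∑ i, (A i j) ^ 2) ≤ colNormMax A :=
    Finset.le_sup' (fun j => Real.sqrt (∑ i, (A i j) ^ 2)) (mem_univ j)
  have h2 : (Real.sqrt (∑ i, (A i j) ^ 2)) ^ 2 = ∑ i, (A i j) ^ 2 :=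
    Real.sq_sqrt (by positivity)
  nlinarith [Real.sqrt_nonneg (∑ i, (A i j) ^ 2)]

private lemma colNormMax_pos (hA : A ≠ 0) : 0 < colNormMax A := by
  rcases (colNormMax_nonneg A).lt_or_eq with h | h
  · exact h
  · exfalso; apply hA
    ext i j
    have h1 : Real.sqrt (∑ i', (A i' j) ^ 2) ≤ 0 :=
      h ▸ Finset.le_sup' (fun j => Real.sqrt (∑ i', (A i' j) ^ 2)) (mem_univ j)
    have h2 : ∑ i', (A i' j) ^ 2 ≤ 0 := by
      nlinarith [Real.sq_sqrt (show (0:ℝ) ≤ ∑ i', (A i' j)^2 by positivity),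
        Real.sqrt_nonneg (∑ i', (A i' j) ^ 2)]
    have h3 := (Finset.sum_eq_zero_iff_of_nonneg (fun i' _ => sq_nonneg (A i' j))).mp
      (le_antisymm h2 (by positivity)) i (mem_univ i)
    simpa using pow_eq_zero_iff (two_ne_zero) |>.mp h3

private lemma gradsq_le (v : Fin n → ℝ) (i : Fin n) :
    (gradf A b v i) ^ 2 ≤ (colNormMax A) ^ 2 * (2 * fobj A b v) := by
  rw [gradf_apply]
  calc (∑ j, A j i * (A.mulVec v - b) j) ^ 2
      ≤ (∑ j, (A j i) ^ 2) * (∑ j, ((A.mulVec v - b) j) ^ 2) :=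
        Finset.sum_mul_sq_le_sq_mul_sq _ _ _
    _ ≤ (colNormMax A) ^ 2 * (2 * fobj A b v) := by
        have h1 := colsq_le A i
        have h2 : ∑ j, ((A.mulVec v - b) j) ^ 2 = 2 * fobj A b v := by unfold fobj; ring
        rw [h2]
        exact mul_le_mul_of_nonneg_right h1 (by nlinarith [fobj_nonneg A b v])

private lemma twof_le (v z : Fin n → ℝ) (hAz : A.mulVec z = b) :
    2 * fobj A b v ≤ (colNormMax A) ^ 2 * (l1 v + l1 z) ^ 2 := by
  set w : Fin n → ℝ := fun i => v i - z i with hw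
  set C := colNormMax A with hC
  have hr : ∀ j, (A.mulVec v - b) j = ∑ i, A j i * w i := by
    intro j
    have hv : (A.mulVec v) j = ∑ i, A j i * v i := by simp [Matrix.mulVec, dotProduct]
    have hzz : (A.mulVec z) j = ∑ i, A j i * z i := by simp [Matrix.mulVec, dotProduct]
    simp only [Pi.sub_apply, hv, ← hAz, hzz, ← Finset.sum_sub_distrib]
    exact Finset.sum_congr rfl fun i _ => by simp [hw]; ring
  have hS : ∀ i i' : Fin n, |∑ j, A j i * A j i'| ≤ C ^ 2 := by
    intro i i'
    have h1 : (∑ j, A j i * A j i') ^ 2 ≤ (∑ j, (A j i)^2) * (∑ j, (A j i')^2) :=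
      Finset.sum_mul_sq_le_sq_mul_sq _ _ _
    have h2 := colsq_le A i
    have h3 := colsq_le A i'
    have h4 : (0:ℝ) ≤ ∑ j, (A j i)^2 := by positivity
    have h5 : (0:ℝ) ≤ ∑ j, (A j i')^2 := by positivity
    have h6 : (0:ℝ) ≤ C ^ 2 := by positivity
    rw [abs_le]
    constructor <;> nlinarith
  have expand : ∑ j, ((A.mulVec v - b) j) ^ 2
      = ∑ i, ∑ i', (w i * w i') * (∑ j, A j i * A j i') := by
    have h1 : ∀ j, ((A.mulVec v - b) j) ^ 2 = ∑ i, ∑ i', (A j i * w i) * (A j i' * w i') := by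
      intro j; rw [hr j, sq, Finset.sum_mul_sum]
    rw [Finset.sum_congr rfl fun j _ => h1 j, Finset.sum_comm]
    refine Finset.sum_congr rfl fun i _ => ?_
    rw [Finset.sum_comm]
    refine Finset.sum_congr rfl fun i' _ => ?_
    rw [Finset.mul_sum]
    exact Finset.sum_congr rfl fun j _ => by ring
  have bound : ∑ i, ∑ i', (w i * w i') * (∑ j, A j i * A j i')
      ≤ ∑ i, ∑ i', |w i| * |w i'| * C ^ 2 := by
    refine Finset.sum_le_sum fun i _ => Finset.sum_le_sum fun i' _ => ?_
    calc (w i * w i') * (∑ j, A j i * A j i') ≤ |(w i * w i') * (∑ j, A j i * A j i')| :=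
          le_abs_self _
      _ = |w i| * |w i'| * |∑ j, A j i * A j i'| := by rw [abs_mul, abs_mul]
      _ ≤ |w i| * |w i'| * C ^ 2 :=
          mul_le_mul_of_nonneg_left (hS i i') (by positivity)
  have final : ∑ i, ∑ i', |w i| * |w i'| * C ^ 2 = C ^ 2 * (l1 w) ^ 2 := by
    have : (l1 w)^2 = ∑ i, ∑ i', |w i| * |w i'| := by
      rw [l1, sq, Finset.sum_mul_sum]
    rw [this, Finset.mul_sum]
    refine Finset.sum_congr rfl fun i _ => ?_
    rw [Finset.mul_sum]
    exact Finset.sum_congr rfl fun i' _ => by ring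
  have hl1w : l1 w ≤ l1 v + l1 z := by
    rw [l1, l1, l1, ← Finset.sum_add_distrib]
    exact Finset.sum_le_sum fun i _ => by simpa [hw] using abs_sub (v i) (z i)
  have hl1w0 : 0 ≤ l1 w := Finset.sum_nonneg fun i _ => abs_nonneg _
  have last : C ^ 2 * (l1 w) ^ 2 ≤ C ^ 2 * (l1 v + l1 z) ^ 2 := by
    apply mul_le_mul_of_nonneg_left _ (by positivity)
    exact pow_le_pow_left₀ hl1w0 hl1w 2
  have h2f : 2 * fobj A b v = ∑ j, ((A.mulVec v - b) j) ^ 2 := by rw [fobj]; ring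
  linarith [expand ▸ (le_trans bound (le_of_eq final)),
    h2f ▸ le_refl (2 * fobj A b v)]

end basics

section bregman

private lemma dh_term_nonneg {z y : ℝ} (hz : 0 ≤ z) (hy : 0 < y) :
    0 ≤ z * Real.log (z / y) - z + y := by
  rcases hz.lt_or_eq with hz' | hz'
  · have hlog : Real.log (y / z) ≤ y / z - 1 := Real.log_le_sub_one_of_pos (by positivity)
    have h2 : Real.log (z / y) = - Real.log (y / z) := by
      rw [← Real.log_inv]; congr 1; field_simp
    rw [h2]
    have := mul_le_mul_of_nonneg_left hlog hz
    have h3 : z * (y / z - 1) = y - z := by field_simp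
    nlinarith
  · simp [← hz']; linarith

private lemma dh_nonneg {n : ℕ} {z y : Fin n → ℝ} (hz : ∀ i, 0 ≤ z i) (hy : ∀ i, 0 < y i) :
    0 ≤ Dh z y :=
  Finset.sum_nonneg fun i _ => dh_term_nonneg (hz i) (hy i)

private lemma dh_term_le_dh {n : ℕ} {z y : Fin n → ℝ} (hz : ∀ i, 0 ≤ z i) (hy : ∀ i, 0 < y i)
    (i : Fin n) : z i * Real.log (z i / y i) - z i + y i ≤ Dh z y :=
  Finset.single_le_sum (fun i _ => dh_term_nonneg (hz i) (hy i)) (mem_univ i)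

private lemma l1_le_dh {n : ℕ} {z y : Fin n → ℝ} (hz : ∀ i, 0 ≤ z i) (hy : ∀ i, 0 < y i) :
    l1 y ≤ 2 * (Dh z y + l1 z) := by
  have key : ∀ i, |y i| ≤ 2 * ((z i * Real.log (z i / y i) - z i + y i) + |z i|) := by
    intro i
    rw [abs_of_pos (hy i), abs_of_nonneg (hz i)]
    rcases (hz i).lt_or_eq with hzi | hzi
    · have hlog : Real.log (y i / (2 * z i)) ≤ y i / (2 * z i) - 1 :=
        Real.log_le_sub_one_of_pos (div_pos (hy i) (by linarith))
      have hsplit : Real.log (y i / z i) = Real.log (y i / (2 * z i)) + Real.log 2 := by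
        rw [← Real.log_mul (ne_of_gt (div_pos (hy i) (by linarith))) (by norm_num)]
        congr 1; field_simp
      have hlog2 : Real.log 2 ≤ 1 := by
        have := Real.log_le_sub_one_of_pos (by norm_num : (0:ℝ) < 2); linarith
      have hzy : Real.log (z i / y i) = - Real.log (y i / z i) := by
        rw [← Real.log_inv]; congr 1; field_simp
      rw [hzy]
      have h1 : z i * Real.log (y i / z i) ≤ z i * (y i / (2 * z i) - 1 + 1) := by
        apply mul_le_mul_of_nonneg_left _ (hz i)
        rw [hsplit]; linarith
      have h2 : z i * (y i / (2 * z i) - 1 + 1) = y i / 2 := by field_simp; ring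
      nlinarith
    · simp [← hzi]; linarith [hy i]
  calc l1 y = ∑ i, |y i| := rfl
    _ ≤ ∑ i, 2 * ((z i * Real.log (z i / y i) - z i + y i) + |z i|) :=
        Finset.sum_le_sum fun i _ => key i
    _ = 2 * (Dh z y + l1 z) := by
        unfold Dh l1; rw [← Finset.sum_add_distrib, Finset.mul_sum]

end bregman

section step
variable {m n : ℕ} [NeZero n] (A : Matrix (Fin m) (Fin n) ℝ) (b : Fin m → ℝ)
  (v : Fin n → ℝ)

set_option linter.unusedSectionVars false

private lemma wnormSq_pos (hv : ∀ i, 0 < v i) (hg : gradf A b v ≠ 0) :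
    0 < wnormSq v (gradf A b v) := by
  obtain ⟨i, hi⟩ := Function.ne_iff.mp hg
  refine Finset.sum_pos' (fun i _ => mul_nonneg (hv i).le (sq_nonneg _)) ⟨i, mem_univ i, ?_⟩
  have : gradf A b v i ≠ 0 := hi
  have h2 : 0 < (gradf A b v i)^2 := by positivity
  exact mul_pos (hv i) h2

private lemma abs_le_linfty (i : Fin n) (g : Fin n → ℝ) : |g i| ≤ linfty g :=
  Finset.le_sup' (fun i => |g i|) (mem_univ i)

private lemma linfty_pos (hg : gradf A b v ≠ 0) : 0 < linfty (gradf A b v) := by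
  obtain ⟨i, hi⟩ := Function.ne_iff.mp hg
  exact lt_of_lt_of_le (abs_pos.mpr hi) (abs_le_linfty i _)

private lemma step_pos (hv : ∀ i, 0 < v i) (hg : gradf A b v ≠ 0) : 0 < polyakStep A b v :=
  lt_min (div_pos (fobj_pos A b v hg) (wnormSq_pos A b v hv hg))
    (div_pos (by norm_num) (linfty_pos A b v hg))

private lemma step_wnorm (hv : ∀ i, 0 < v i) (hg : gradf A b v ≠ 0) :
    polyakStep A b v * wnormSq v (gradf A b v) ≤ fobj A b v := by
  have h1 : polyakStep A b v ≤ fobj A b v / wnormSq v (gradf A b v) := min_le_left _ _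
  have h2 := wnormSq_pos A b v hv hg
  calc polyakStep A b v * wnormSq v (gradf A b v)
      ≤ (fobj A b v / wnormSq v (gradf A b v)) * wnormSq v (gradf A b v) :=
        mul_le_mul_of_nonneg_right h1 h2.le
    _ = fobj A b v := by field_simp

private lemma step_inf (hv : ∀ i, 0 < v i) (hg : gradf A b v ≠ 0) (i : Fin n) :
    polyakStep A b v * |gradf A b v i| ≤ 1.79 := by
  have h1 : polyakStep A b v ≤ 1.79 / linfty (gradf A b v) := min_le_right _ _
  have h2 := linfty_pos A b v hg
  have h3 := step_pos A b v hv hg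
  calc polyakStep A b v * |gradf A b v i| ≤ polyakStep A b v * linfty (gradf A b v) :=
        mul_le_mul_of_nonneg_left (abs_le_linfty i _) h3.le
    _ ≤ (1.79 / linfty (gradf A b v)) * linfty (gradf A b v) :=
        mul_le_mul_of_nonneg_right h1 h2.le
    _ = 1.79 := by field_simp

private lemma step_decrease (hv : ∀ i, 0 < v i) (hg : gradf A b v ≠ 0)
    (z : Fin n → ℝ) (hz : ∀ i, 0 ≤ z i) (hAz : A.mulVec z = b) :
    Dh z (fun i => v i * Real.exp (-(polyakStep A b v) * gradf A b v i))
      ≤ Dh z v - polyakStep A b v * fobj A b v := by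
  set α := polyakStep A b v with hα
  set g := gradf A b v with hgdef
  have hαpos := step_pos A b v hv hg
  have key : ∀ i : Fin n,
      z i * Real.log (z i / (v i * Real.exp (-α * g i))) - z i + v i * Real.exp (-α * g i)
      ≤ (z i * Real.log (z i / v i) - z i + v i)
        + (α * (g i * (z i - v i)) + α^2 * (v i * (g i)^2)) := by
    intro i
    have hexp : Real.exp (-α * g i) ≤ 1 + (-α * g i) + (-α * g i)^2 := by
      apply exp_quad_ub
      have h1 := step_inf A b v hv hg i
      have h2 : -α * g i ≤ α * |g i| := by
        rcases abs_cases (g i) with ⟨h3, h4⟩ | ⟨h3, h4⟩ <;> nlinarith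
      linarith
    have hvexp : v i * Real.exp (-α * g i) ≤ v i * (1 + (-α * g i) + (-α * g i)^2) :=
      mul_le_mul_of_nonneg_left hexp (hv i).le
    have hlog : z i * Real.log (z i / (v i * Real.exp (-α * g i)))
        = z i * Real.log (z i / v i) + z i * (α * g i) := by
      rcases (hz i).lt_or_eq with hzi | hzi
      · have hzi' : z i ≠ 0 := ne_of_gt hzi
        have hvi' : v i ≠ 0 := ne_of_gt (hv i)
        have hexp' : Real.exp (-α * g i) ≠ 0 := (Real.exp_pos _).ne'
        rw [Real.log_div hzi' (by positivity), Real.log_mul hvi' hexp', Real.log_exp,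
          Real.log_div hzi' hvi']
        ring
      · rw [← hzi]; ring
    rw [hlog]
    nlinarith [hvexp]
  have hDh : Dh z (fun i => v i * Real.exp (-α * g i))
      ≤ ∑ i, ((z i * Real.log (z i / v i) - z i + v i)
          + (α * (g i * (z i - v i)) + α^2 * (v i * (g i)^2))) := by
    unfold Dh
    exact Finset.sum_le_sum fun i _ => key i
  have hsplit : ∑ i, ((z i * Real.log (z i / v i) - z i + v i)
          + (α * (g i * (z i - v i)) + α^2 * (v i * (g i)^2)))
      = Dh z v + (α * (∑ i, g i * (z i - v i)) + α^2 * wnormSq v g) := by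
    unfold Dh wnormSq
    rw [Finset.mul_sum, Finset.mul_sum, ← Finset.sum_add_distrib, ← Finset.sum_add_distrib]
  have hinner : ∑ i, g i * (z i - v i) = -(2 * fobj A b v) := by
    have h1 := grad_inner A b v z hAz
    have h2 : ∑ i, g i * (z i - v i) = -∑ i, gradf A b v i * (v i - z i) := by
      rw [← Finset.sum_neg_distrib]
      exact Finset.sum_congr rfl fun i _ => by simp [hgdef]; ring
    rw [h2, h1]
  have hw : α^2 * wnormSq v g ≤ α * fobj A b v := by
    have h1 := step_wnorm A b v hv hg
    have h2 : α^2 * wnormSq v g = α * (α * wnormSq v g) := by ring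
    rw [h2]
    exact mul_le_mul_of_nonneg_left h1 hαpos.le
  calc Dh z (fun i => v i * Real.exp (-α * g i))
      ≤ Dh z v + (α * (∑ i, g i * (z i - v i)) + α^2 * wnormSq v g) := hsplit ▸ hDh
    _ = Dh z v - 2 * (α * fobj A b v) + α^2 * wnormSq v g := by rw [hinner]; ring
    _ ≤ Dh z v - α * fobj A b v := by linarith

private lemma step_lb (hA : A ≠ 0)
    (hv : ∀ i, 0 < v i) (hg : gradf A b v ≠ 0)
    (z : Fin n → ℝ) (hz : ∀ i, 0 ≤ z i) (hAz : A.mulVec z = b)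
    (R : ℝ) (hDR : Dh z v ≤ R) :
    1 / (4 * (R + l1 z) * (colNormMax A) ^ 2) ≤ polyakStep A b v := by
  set C := colNormMax A with hC
  have hCpos : 0 < C := colNormMax_pos A hA
  have hf : 0 < fobj A b v := fobj_pos A b v hg
  have hD0 : 0 ≤ Dh z v := dh_nonneg hz hv
  have hR0 : 0 ≤ R := le_trans hD0 hDR
  have hl1z : 0 ≤ l1 z := Finset.sum_nonneg fun i _ => abs_nonneg _
  have hl1v : 0 < l1 v := Finset.sum_pos (fun i _ => abs_pos.mpr (ne_of_gt (hv i))) univ_nonempty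
  have hl1 : l1 v ≤ 2 * (R + l1 z) := le_trans (l1_le_dh hz hv) (by linarith)
  have hXpos : 0 < R + l1 z := by
    rcases hl1z.lt_or_eq with h | h
    · linarith
    · nlinarith
  have hw : 0 < wnormSq v (gradf A b v) := wnormSq_pos A b v hv hg
  have hL : 0 < linfty (gradf A b v) := linfty_pos A b v hg
  have hcpos : 0 < 4 * (R + l1 z) * C ^ 2 := by positivity
  apply le_min
  · have hwle : wnormSq v (gradf A b v) ≤ l1 v * (C ^ 2 * (2 * fobj A b v)) := by
      unfold wnormSq
      have h1 : ∀ i, v i * (gradf A b v i)^2 ≤ v i * (C ^ 2 * (2 * fobj A b v)) :=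
        fun i => mul_le_mul_of_nonneg_left (gradsq_le A b v i) (hv i).le
      calc ∑ i, v i * (gradf A b v i)^2 ≤ ∑ i, v i * (C ^ 2 * (2 * fobj A b v)) :=
            Finset.sum_le_sum fun i _ => h1 i
        _ = (∑ i, v i) * (C ^ 2 * (2 * fobj A b v)) := by rw [Finset.sum_mul]
        _ = l1 v * (C ^ 2 * (2 * fobj A b v)) := by
            congr 1
            exact (Finset.sum_congr rfl fun i _ => (abs_of_pos (hv i)).symm)
    have h2 : fobj A b v / (l1 v * (C ^ 2 * (2 * fobj A b v)))
        ≤ fobj A b v / wnormSq v (gradf A b v) :=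
      div_le_div_of_nonneg_left hf.le hw hwle
    have h3 : fobj A b v / (l1 v * (C ^ 2 * (2 * fobj A b v))) = 1 / (2 * l1 v * C ^ 2) := by
      field_simp
    have h4 : 1 / (4 * (R + l1 z) * C ^ 2) ≤ 1 / (2 * l1 v * C ^ 2) := by
      apply one_div_le_one_div_of_le (by positivity)
      nlinarith
    rw [h3] at h2
    linarith
  · have hLle : linfty (gradf A b v) ≤ 3 * C ^ 2 * (R + l1 z) := by
      apply Finset.sup'_le
      intro i _
      have h1 := gradsq_le A b v i
      have h2 := twof_le A b v z hAz
      have h3 : (gradf A b v i)^2 ≤ (C ^ 2 * (l1 v + l1 z)) ^ 2 := by nlinarith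
      have h4 : 0 ≤ C ^ 2 * (l1 v + l1 z) := by positivity
      have h5 : |gradf A b v i| ≤ C ^ 2 * (l1 v + l1 z) := by
        nlinarith [sq_abs (gradf A b v i), abs_nonneg (gradf A b v i)]
      calc |gradf A b v i| ≤ C ^ 2 * (l1 v + l1 z) := h5
        _ ≤ 3 * C ^ 2 * (R + l1 z) := by nlinarith
    calc 1 / (4 * (R + l1 z) * C ^ 2) ≤ 1.79 / (3 * C ^ 2 * (R + l1 z)) := by
          rw [div_le_div_iff₀ hcpos (by positivity)]
          nlinarith
      _ ≤ 1.79 / linfty (gradf A b v) :=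
          div_le_div_of_nonneg_left (by norm_num) hL hLle

end step

/-- Convergence of entropic mirror descent with Polyak-type stepsizes:
if `S₊ ≠ ∅`, `x₀ ∈ ℝⁿ₊₊` and `x_{k+1} = x_k ∘ exp(-α_k ∇f(x_k))` with the
Polyak-type stepsize `α_k`, then `(x_k)` converges to some `x* ∈ S₊` and
`min_{0 ≤ i ≤ k} f(x_i) ≤ 4 R (R + ‖x*‖₁) C_A² / (k+1)` where `R = D_h(x*, x₀)`. -/
theorem mirror_descent_convergence {m n : ℕ} [NeZero n]
    (A : Matrix (Fin m) (Fin n) ℝ) (hA : A ≠ 0) (b : Fin m → ℝ)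
    (hS : ∃ z : Fin n → ℝ, (∀ i, 0 ≤ z i) ∧ A.mulVec z = b)
    (x : ℕ → Fin n → ℝ) (hx0 : ∀ i, 0 < x 0 i)
    (hgrad : ∀ k, gradf A b (x k) ≠ 0)
    (hrec : ∀ k i, x (k + 1) i =
      x k i * Real.exp (-(polyakStep A b (x k)) * gradf A b (x k) i)) :
    ∃ xstar : Fin n → ℝ, (∀ i, 0 ≤ xstar i) ∧ A.mulVec xstar = b ∧
      Filter.Tendsto x Filter.atTop (nhds xstar) ∧
      ∀ k : ℕ, (Finset.range (k + 1)).inf' Finset.nonempty_range_add_one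
          (fun i => fobj A b (x i)) ≤
        4 * Dh xstar (x 0) * (Dh xstar (x 0) + l1 xstar) * (colNormMax A) ^ 2 / (k + 1) := by
  obtain ⟨z0, hz0, hAz0⟩ := hS
  set C := colNormMax A with hC
  have hCpos : 0 < C := colNormMax_pos A hA
  -- positivity of iterates
  have hxpos : ∀ k i, 0 < x k i := by
    intro k
    induction k with
    | zero => exact hx0
    | succ k ih =>
      intro i
      rw [hrec k i]
      exact mul_pos (ih i) (Real.exp_pos _)
  have hxfun : ∀ k, x (k + 1)
      = fun i => x k i * Real.exp (-(polyakStep A b (x k)) * gradf A b (x k) i) :=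
    fun k => funext fun i => hrec k i
  -- one-step decrease, for any z in S₊
  have hdec : ∀ (z : Fin n → ℝ), (∀ i, 0 ≤ z i) → A.mulVec z = b → ∀ k,
      Dh z (x (k + 1)) ≤ Dh z (x k) - polyakStep A b (x k) * fobj A b (x k) := by
    intro z hz hAz k
    rw [hxfun k]
    exact step_decrease A b (x k) (hxpos k) (hgrad k) z hz hAz
  have hαfpos : ∀ k, 0 < polyakStep A b (x k) * fobj A b (x k) :=
    fun k => mul_pos (step_pos A b (x k) (hxpos k) (hgrad k)) (fobj_pos A b (x k) (hgrad k))
  have hanti : ∀ (z : Fin n → ℝ), (∀ i, 0 ≤ z i) → A.mulVec z = b →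
      Antitone (fun k => Dh z (x k)) := by
    intro z hz hAz
    apply antitone_nat_of_succ_le
    intro k
    have := hdec z hz hAz k
    have := hαfpos k
    linarith
  -- telescoping sum
  have htel : ∀ (z : Fin n → ℝ), (∀ i, 0 ≤ z i) → A.mulVec z = b → ∀ K,
      ∑ i ∈ Finset.range K, polyakStep A b (x i) * fobj A b (x i) ≤ Dh z (x 0) := by
    intro z hz hAz K
    have key : ∀ K, ∑ i ∈ Finset.range K, polyakStep A b (x i) * fobj A b (x i)
        ≤ Dh z (x 0) - Dh z (x K) := by
      intro K
      induction K with
      | zero => simp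
      | succ K ih =>
        rw [Finset.sum_range_succ]
        have := hdec z hz hAz K
        linarith
    have := key K
    have := dh_nonneg hz (hxpos K)
    linarith
  -- uniform lower bound on the stepsizes
  have hlb : ∀ (z : Fin n → ℝ), (∀ i, 0 ≤ z i) → A.mulVec z = b → ∀ k,
      1 / (4 * (Dh z (x 0) + l1 z) * C ^ 2) ≤ polyakStep A b (x k) := by
    intro z hz hAz k
    exact step_lb A b (x k) hA (hxpos k) (hgrad k) z hz hAz (Dh z (x 0))
      (hanti z hz hAz (Nat.zero_le k))
  -- positivity of R + l1 z
  have hXpos : ∀ (z : Fin n → ℝ), (∀ i, 0 ≤ z i) → 0 < Dh z (x 0) + l1 z := by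
    intro z hz
    have hl1v : 0 < l1 (x 0) :=
      Finset.sum_pos (fun i _ => abs_pos.mpr (ne_of_gt (hx0 i))) univ_nonempty
    have h1 : l1 (x 0) ≤ 2 * (Dh z (x 0) + l1 z) := l1_le_dh hz hx0
    linarith
  -- summability of the f values
  set c0 : ℝ := 1 / (4 * (Dh z0 (x 0) + l1 z0) * C ^ 2) with hc0
  have hc0pos : 0 < c0 := by
    rw [hc0]
    have := hXpos z0 hz0
    positivity
  have hfsum : ∀ K, ∑ i ∈ Finset.range K, fobj A b (x i) ≤ Dh z0 (x 0) / c0 := by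
    intro K
    have h1 : ∑ i ∈ Finset.range K, c0 * fobj A b (x i)
        ≤ ∑ i ∈ Finset.range K, polyakStep A b (x i) * fobj A b (x i) := by
      apply Finset.sum_le_sum
      intro i _
      exact mul_le_mul_of_nonneg_right (hlb z0 hz0 hAz0 i) (fobj_nonneg A b (x i))
    rw [← Finset.mul_sum] at h1
    have h2 := htel z0 hz0 hAz0 K
    rw [le_div_iff₀ hc0pos]
    calc (∑ i ∈ Finset.range K, fobj A b (x i)) * c0
        = c0 * ∑ i ∈ Finset.range K, fobj A b (x i) := by ring
      _ ≤ Dh z0 (x 0) := le_trans h1 h2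
  have hftend : Tendsto (fun k => fobj A b (x k)) atTop (nhds 0) :=
    (summable_of_sum_range_le (fun k => fobj_nonneg A b (x k)) hfsum).tendsto_atTop_zero
  -- boundedness and a convergent subsequence
  set M : ℝ := 2 * (Dh z0 (x 0) + l1 z0) with hM
  have hxM : ∀ k, x k ∈ Set.Icc (0 : Fin n → ℝ) (fun _ => M) := by
    intro k
    rw [Set.mem_Icc]
    constructor
    · intro i; exact (hxpos k i).le
    · intro i
      have h1 : x k i ≤ l1 (x k) := by
        rw [← abs_of_pos (hxpos k i)]
        exact Finset.single_le_sum (fun i _ => abs_nonneg (x k i)) (mem_univ i)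
      have h2 : l1 (x k) ≤ 2 * (Dh z0 (x k) + l1 z0) := l1_le_dh hz0 (hxpos k)
      have h3 : Dh z0 (x k) ≤ Dh z0 (x 0) := hanti z0 hz0 hAz0 (Nat.zero_le k)
      calc x k i ≤ l1 (x k) := h1
        _ ≤ M := by rw [hM]; linarith
  obtain ⟨xbar, hxbarmem, φ, hφ, hφt⟩ := isCompact_Icc.tendsto_subseq hxM
  have hxbar_nonneg : ∀ i, 0 ≤ xbar i := fun i => (Set.mem_Icc.mp hxbarmem).1 i
  -- continuity of fobj and f(xbar) = 0
  have hfcont : Continuous (fobj A b) := by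
    unfold fobj
    apply Continuous.mul continuous_const
    apply continuous_finset_sum
    intro j _
    apply Continuous.pow
    simp only [Pi.sub_apply]
    apply Continuous.sub _ continuous_const
    have : (fun v : Fin n → ℝ => A.mulVec v j) = fun v => ∑ i, A j i * v i := by
      funext v; simp [Matrix.mulVec, dotProduct]
    rw [this]
    exact continuous_finset_sum _ fun i _ => continuous_const.mul (continuous_apply i)
  have hfxbar : fobj A b xbar = 0 := by
    have h1 : Tendsto (fun j => fobj A b (x (φ j))) atTop (nhds (fobj A b xbar)) :=
      (hfcont.continuousAt.tendsto).comp hφt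
    have h2 : Tendsto (fun j => fobj A b (x (φ j))) atTop (nhds 0) :=
      hftend.comp hφ.tendsto_atTop
    exact tendsto_nhds_unique h1 h2
  have hAxbar : A.mulVec xbar = b := by
    have hsum : ∑ j, ((A.mulVec xbar - b) j) ^ 2 = 0 := by
      unfold fobj at hfxbar; linarith
    funext j
    have := (Finset.sum_eq_zero_iff_of_nonneg
      (fun j _ => sq_nonneg ((A.mulVec xbar - b) j))).mp hsum j (mem_univ j)
    have h2 : (A.mulVec xbar - b) j = 0 := pow_eq_zero_iff (by norm_num) |>.mp this
    have := sub_eq_zero.mp h2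
    simpa using this
  -- the Bregman divergences w.r.t. xbar tend to 0 along the subsequence
  have hcoord : ∀ i, Tendsto (fun j => x (φ j) i) atTop (nhds (xbar i)) := by
    intro i
    exact (tendsto_pi_nhds.mp hφt) i
  have hterm_tend : ∀ i : Fin n, Tendsto
      (fun j => xbar i * Real.log (xbar i / x (φ j) i) - xbar i + x (φ j) i)
      atTop (nhds 0) := by
    intro i
    rcases (hxbar_nonneg i).lt_or_eq with hpos | hzero
    · have hcont : ContinuousAt (fun t => xbar i * Real.log (xbar i / t) - xbar i + t)
          (xbar i) := by
        apply ContinuousAt.add _ continuousAt_id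
        apply ContinuousAt.sub _ continuousAt_const
        apply ContinuousAt.mul continuousAt_const
        exact ContinuousAt.log
          (ContinuousAt.div continuousAt_const continuousAt_id (ne_of_gt hpos))
          (by rw [div_self (ne_of_gt hpos)]; norm_num)
      have hval : xbar i * Real.log (xbar i / xbar i) - xbar i + xbar i = 0 := by
        rw [div_self (ne_of_gt hpos), Real.log_one]; ring
      have := hcont.tendsto.comp (hcoord i)
      rw [hval] at this
      exact this
    · have heq : (fun j => xbar i * Real.log (xbar i / x (φ j) i) - xbar i + x (φ j) i)
          = fun j => x (φ j) i := by
        funext j; rw [← hzero]; ring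
      rw [heq]
      simpa [← hzero] using hcoord i
  have hsub0 : Tendsto (fun j => Dh xbar (x (φ j))) atTop (nhds 0) := by
    unfold Dh
    have := tendsto_finset_sum (univ : Finset (Fin n)) (fun i _ => hterm_tend i)
    simpa using this
  -- full sequence of Bregman divergences tends to 0
  have hDanti : Antitone (fun k => Dh xbar (x k)) := hanti xbar hxbar_nonneg hAxbar
  have hDnonneg : ∀ k, 0 ≤ Dh xbar (x k) := fun k => dh_nonneg hxbar_nonneg (hxpos k)
  have hDbdd : BddBelow (Set.range fun k => Dh xbar (x k)) := by
    refine ⟨0, fun y hy => ?_⟩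
    obtain ⟨k, hk⟩ := hy
    rw [← hk]; exact hDnonneg k
  have hDinf := tendsto_atTop_ciInf hDanti hDbdd
  have hDsub : Tendsto (fun j => Dh xbar (x (φ j))) atTop
      (nhds (⨅ k, Dh xbar (x k))) := hDinf.comp hφ.tendsto_atTop
  have hinf0 : (⨅ k, Dh xbar (x k)) = 0 := tendsto_nhds_unique hDsub hsub0
  have hD0 : Tendsto (fun k => Dh xbar (x k)) atTop (nhds 0) := hinf0 ▸ hDinf
  -- coordinatewise convergence of the whole sequence
  have hxtend : Tendsto x atTop (nhds xbar) := by
    rw [tendsto_pi_nhds]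
    intro i
    have hterm_le : ∀ k, xbar i * Real.log (xbar i / x k i) - xbar i + x k i
        ≤ Dh xbar (x k) := fun k => dh_term_le_dh hxbar_nonneg (hxpos k) i
    have hterm_nn : ∀ k, 0 ≤ xbar i * Real.log (xbar i / x k i) - xbar i + x k i :=
      fun k => dh_term_nonneg (hxbar_nonneg i) (hxpos k i)
    have htt : Tendsto (fun k => xbar i * Real.log (xbar i / x k i) - xbar i + x k i)
        atTop (nhds 0) := by
      apply tendsto_of_tendsto_of_tendsto_of_le_of_le tendsto_const_nhds hD0
        (fun k => hterm_nn k) (fun k => hterm_le k)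
    rcases (hxbar_nonneg i).lt_or_eq with hpos | hzero
    · set t : ℕ → ℝ := fun k => Real.log (x k i / xbar i) with htdef
      have hxk : ∀ k, x k i = xbar i * Real.exp (t k) := by
        intro k
        rw [htdef]
        rw [Real.exp_log (div_pos (hxpos k i) hpos)]
        field_simp
      have hterm_eq : ∀ k, xbar i * Real.log (xbar i / x k i) - xbar i + x k i
          = xbar i * (Real.exp (t k) - 1 - t k) := by
        intro k
        have hlogneg : Real.log (xbar i / x k i) = -(t k) := by
          rw [htdef]
          rw [← Real.log_inv]
          congr 1
          field_simp
        rw [hlogneg, hxk k]; ring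
      have h2 : Tendsto (fun k => Real.exp (t k) - 1 - t k) atTop (nhds 0) := by
        have h3 := htt.const_mul ((xbar i)⁻¹)
        simp only [mul_zero] at h3
        have h4 : (fun k => (xbar i)⁻¹ * (xbar i * Real.log (xbar i / x k i) - xbar i + x k i))
            = fun k => Real.exp (t k) - 1 - t k := by
          funext k
          rw [hterm_eq k, ← mul_assoc, inv_mul_cancel₀ (ne_of_gt hpos), one_mul]
        rw [h4] at h3
        exact h3
      have h5 := tendsto_of_exp_sub h2
      have h6 : Tendsto (fun k => xbar i * Real.exp (t k)) atTop (nhds (xbar i * 1)) := by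
        apply Tendsto.const_mul
        have := Real.continuous_exp.continuousAt (x := (0:ℝ))
        have h7 := this.tendsto.comp h5
        simpa [Function.comp_def] using h7
      have h8 : (fun k => xbar i * Real.exp (t k)) = fun k => x k i := by
        funext k; rw [← hxk k]
      rw [h8] at h6
      simpa using h6
    · have heq : (fun k => xbar i * Real.log (xbar i / x k i) - xbar i + x k i)
          = fun k => x k i := by
        funext k; rw [← hzero]; ring
      rw [heq] at htt
      rw [← hzero]
      exact htt
  -- final complexity bound with z = xbar
  refine ⟨xbar, hxbar_nonneg, hAxbar, hxtend, ?_⟩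
  intro k
  set R : ℝ := Dh xbar (x 0) with hR
  set Q : ℝ := 4 * (R + l1 xbar) * C ^ 2 with hQ
  have hQpos : 0 < Q := by
    rw [hQ]
    have := hXpos xbar hxbar_nonneg
    positivity
  set F : ℝ := (Finset.range (k + 1)).inf' Finset.nonempty_range_add_one
      (fun i => fobj A b (x i)) with hF
  have hFle : ∀ i ∈ Finset.range (k + 1), F ≤ fobj A b (x i) :=
    fun i hi => Finset.inf'_le _ hi
  have hFnn : 0 ≤ F := by
    rw [hF]
    apply Finset.le_inf'
    intro i _
    exact fobj_nonneg A b (x i)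
  have hsum : (k + 1 : ℝ) * ((1 / Q) * F) ≤ R := by
    have h1 : ∀ i ∈ Finset.range (k + 1),
        (1 / Q) * F ≤ polyakStep A b (x i) * fobj A b (x i) := by
      intro i hi
      exact mul_le_mul (hlb xbar hxbar_nonneg hAxbar i) (hFle i hi) hFnn
        (step_pos A b (x i) (hxpos i) (hgrad i)).le
    calc (k + 1 : ℝ) * ((1 / Q) * F)
        = ∑ _i ∈ Finset.range (k + 1), (1 / Q) * F := by
          rw [Finset.sum_const, Finset.card_range, nsmul_eq_mul]
          push_cast
          ring
      _ ≤ ∑ i ∈ Finset.range (k + 1), polyakStep A b (x i) * fobj A b (x i) :=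
          Finset.sum_le_sum h1
      _ ≤ R := htel xbar hxbar_nonneg hAxbar (k + 1)
  have hgoal : F ≤ R * Q / (k + 1) := by
    rw [le_div_iff₀ (by positivity : (0:ℝ) < (k:ℝ) + 1)]
    have h2 : (k + 1 : ℝ) * ((1 / Q) * F) * Q ≤ R * Q :=
      mul_le_mul_of_nonneg_right hsum hQpos.le
    have h3 : (k + 1 : ℝ) * ((1 / Q) * F) * Q = F * ((k:ℝ) + 1) := by
      field_simp
    rw [h3] at h2
    exact h2
  calc F ≤ R * Q / (k + 1) := hgoal
    _ = 4 * R * (R + l1 xbar) * C ^ 2 / (k + 1) := by rw [hQ]; ring_nf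
end
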